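/- For a class C of finite structures over a finite relational signature τ, if C is closed under isomorphism, inverse homomorphisms, and disjoint unions, and C is nonempty, then there exists a countable τ-structure B such that C is exactly the class of finite τ-structures admitting a homomorphism to B. -/

import Mathlib

structure Sig : Type 1 where
  symb : Type
  ar : symb → ℕ

structure Str (σ : Sig) : Type 1 where
  dom : Type
  rel : ∀ s : σ.symb, Set ((Fin (σ.ar s)) → dom)

def IsHom {σ : Sig} (A B : Str σ) (h : A.dom → B.dom) : Prop :=
  ∀ s t, t ∈ A.rel s → (h ∘ t) ∈ B.rel s

def HomTo {σ : Sig} (A B : Str σ) : Prop := ∃ h, IsHom A B h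

def IsEmb {σ : Sig} (A B : Str σ) (h : A.dom → B.dom) : Prop :=
  Function.Injective h ∧ ∀ s t, t ∈ A.rel s ↔ (h ∘ t) ∈ B.rel s

def EmbTo {σ : Sig} (A B : Str σ) : Prop := ∃ h, IsEmb A B h

def IsoTo {σ : Sig} (A B : Str σ) : Prop := ∃ h, IsEmb A B h ∧ Function.Surjective h

def disjUnion {σ : Sig} (A B : Str σ) : Str σ where
  dom := A.dom ⊕ B.dom
  rel := fun s => {t | (∃ u ∈ A.rel s, t = Sum.inl ∘ u) ∨ (∃ u ∈ B.rel s, t = Sum.inr ∘ u)}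

/-! ### Auxiliary definitions -/

/-- Representative finite structures on domain `Fin n`. -/
abbrev FRep (σ : Sig) (n : ℕ) := ∀ s : σ.symb, Set (Fin (σ.ar s) → Fin n)

def FRep.toStr {σ : Sig} {n : ℕ} (r : FRep σ n) : Str σ := ⟨Fin n, r⟩

/-- Index type: representatives lying in `C`. -/
abbrev FIdx (σ : Sig) (C : Set (Str σ)) := {p : Σ n, FRep σ n // FRep.toStr p.2 ∈ C}

/-- The big disjoint union of all representatives in `C`. -/
def bigB (σ : Sig) (C : Set (Str σ)) : Str σ where
  dom := Σ i : FIdx σ C, Fin i.1.1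
  rel := fun s => {t | ∃ i : FIdx σ C, ∃ u ∈ i.1.2 s, t = fun x => ⟨i, u x⟩}

lemma bigB_countable (σ : Sig) (hfs : Finite σ.symb) (C : Set (Str σ)) :
    Countable (bigB σ C).dom := by
  haveI := hfs
  haveI : Countable (Σ n, FRep σ n) := by
    haveI : ∀ n, Finite (FRep σ n) := fun n => by infer_instance
    infer_instance
  haveI : Countable (FIdx σ C) := by infer_instance
  show Countable (Σ i : FIdx σ C, Fin i.1.1)
  infer_instance

/-- A common target in `C` for any finite list of members of `C`. -/
lemma exists_common_target (σ : Sig) (C : Set (Str σ))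
    (hdu : ∀ A B : Str σ, A ∈ C → B ∈ C → disjUnion A B ∈ C)
    (hne : C.Nonempty) :
    ∀ L : List (Str σ), (∀ X ∈ L, X ∈ C) → ∃ D ∈ C, ∀ X ∈ L, HomTo X D := by
  intro L
  induction L with
  | nil => exact fun _ => ⟨hne.choose, hne.choose_spec, by simp⟩
  | cons X L ih =>
    intro hL
    obtain ⟨D', hD', hhom⟩ := ih (fun Y hY => hL Y (List.mem_cons_of_mem _ hY))
    refine ⟨disjUnion X D', hdu X D' (hL X (by simp)) hD', ?_⟩
    intro Y hY
    rcases List.mem_cons.mp hY with rfl | hY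
    · exact ⟨Sum.inl, fun s t ht => Or.inl ⟨t, ht, rfl⟩⟩
    · obtain ⟨g, hg⟩ := hhom Y hY
      exact ⟨Sum.inr ∘ g, fun s t ht => Or.inr ⟨g ∘ t, hg s t ht, rfl⟩⟩

theorem stmt0 (σ : Sig) (hfs : Finite σ.symb) (C : Set (Str σ))
    (hfin : ∀ A ∈ C, Finite A.dom)
    (hiso : ∀ A B : Str σ, A ∈ C → IsoTo A B → B ∈ C)
    (hinv : ∀ A B : Str σ, B ∈ C → Finite A.dom → HomTo A B → A ∈ C)
    (hdu : ∀ A B : Str σ, A ∈ C → B ∈ C → disjUnion A B ∈ C)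
    (hne : C.Nonempty) :
    ∃ B : Str σ, Countable B.dom ∧
      ∀ A : Str σ, Finite A.dom → (A ∈ C ↔ HomTo A B) := by
  classical
  refine ⟨bigB σ C, bigB_countable σ hfs C, ?_⟩
  intro A hA
  constructor
  · -- forward: A ∈ C → HomTo A (bigB σ C)
    intro hAC
    haveI := hA
    obtain ⟨n, ⟨e⟩⟩ := Finite.exists_equiv_fin A.dom
    set r : FRep σ n := fun s => {t | e.symm ∘ t ∈ A.rel s} with hr
    have hmem : ∀ s (t : Fin (σ.ar s) → A.dom), t ∈ A.rel s ↔ (⇑e ∘ t) ∈ r s := by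
      intro s t
      simp only [hr, Set.mem_setOf_eq]
      have : e.symm ∘ (⇑e ∘ t) = t := by funext x; simp
      rw [this]
    have hrC : FRep.toStr r ∈ C := by
      refine hiso A (FRep.toStr r) hAC ⟨e, ⟨e.injective, hmem⟩, e.surjective⟩
    refine ⟨fun a => ⟨⟨⟨n, r⟩, hrC⟩, e a⟩, ?_⟩
    intro s t ht
    exact ⟨⟨⟨n, r⟩, hrC⟩, ⇑e ∘ t, (hmem s t).mp ht, rfl⟩
  · -- backward: HomTo A (bigB σ C) → A ∈ C
    rintro ⟨h, hh⟩
    haveI := hfs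
    haveI := hA
    -- tuples of A
    let T := {st : Σ s : σ.symb, Fin (σ.ar s) → A.dom // st.2 ∈ A.rel st.1}
    haveI : Finite T := by
      haveI : Finite (Σ s : σ.symb, Fin (σ.ar s) → A.dom) := by infer_instance
      infer_instance
    -- for each tuple, a component containing its image
    have hw : ∀ q : T, ∃ i : FIdx σ C, ∃ u ∈ i.1.2 q.1.1,
        (h ∘ q.1.2) = fun x => ⟨i, u x⟩ := fun q => hh q.1.1 q.1.2 q.2
    choose w u hu hequ using hw
    -- the finite set of components used
    set S : Set (FIdx σ C) := Set.range (fun a => (h a).1) ∪ Set.range w with hS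
    have hSfin : S.Finite := (Set.finite_range _).union (Set.finite_range _)
    -- a common target for all used components
    obtain ⟨D, hD, hDhom⟩ := exists_common_target σ C hdu hne
      (hSfin.toFinset.toList.map (fun i => FRep.toStr i.1.2))
      (by
        intro X hX
        simp only [List.mem_map] at hX
        obtain ⟨i, _, rfl⟩ := hX
        exact i.2)
    have hhom : ∀ i ∈ S, HomTo (FRep.toStr i.1.2) D := by
      intro i hi
      exact hDhom _ (List.mem_map_of_mem (by simpa using hi))
    choose F hF using hhom
    have pf : ∀ a : A.dom, (h a).1 ∈ S := fun a => Or.inl ⟨a, rfl⟩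
    set g : A.dom → D.dom := fun a => F (h a).1 (pf a) ((h a).2) with hg
    refine hinv A D hD hA ⟨g, ?_⟩
    intro s t ht
    set q : T := ⟨⟨s, t⟩, ht⟩ with hq
    have hiS : w q ∈ S := Or.inr ⟨q, rfl⟩
    have key : g ∘ t = F (w q) hiS ∘ u q := by
      funext x
      have e1 : h (t x) = ⟨w q, u q x⟩ := congrFun (hequ q) x
      have gen : ∀ (b : (bigB σ C).dom) (hb : b.1 ∈ S),
          b = ⟨w q, u q x⟩ → F b.1 hb b.2 = F (w q) hiS (u q x) := by
        rintro b hb rfl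
        rfl
      exact gen (h (t x)) (pf (t x)) e1
    rw [key]
    exact hF (w q) hiS s (u q) (hu q)
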